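/- Privacy amplification by subsampling: Let A be an (ε*, δ)-differentially private algorithm on databases of size n. Fix ε ≤ 1 and let t = (n/ε)(3 + e^{ε*}). Define B on databases of size t to choose a uniformly random subset J ⊆ {1,…,t} of size n and run A on the sub-database indexed by J (as a multiset). Then B is (ε, (4ε/(3+e^{ε*}))·δ)-differentially private. -/

import Mathlib

set_option maxHeartbeats 4000000

/-- Privacy amplification by subsampling: if `A` is `(ε*,δ)`-differentially
private on multisets of size `n`, `ε ≤ 1`, and `t = (n/ε)(3 + e^{ε*})`, then the
algorithm that picks a uniformly random size-`n` subset `J ⊆ [t]` and runs `A`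
on the induced sub-multiset is `(ε, (4ε/(3+e^{ε*}))·δ)`-differentially private. -/
theorem stmt6 {X Ω : Type*} (n t : ℕ) (hn : 1 ≤ n) (hnt : n ≤ t)
    (ε εs δ : ℝ) (hε : 0 < ε) (hε1 : ε ≤ 1) (hδ : 0 ≤ δ)
    (ht : (t : ℝ) = ((n : ℝ) / ε) * (3 + Real.exp εs))
    (A : Multiset X → Set Ω → ℝ)
    (hA0 : ∀ D F, 0 ≤ A D F) (hA1 : ∀ D F, A D F ≤ 1)
    (hDP : ∀ (m : Multiset X) (x y : X), Multiset.card m = n - 1 →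
      ∀ F : Set Ω, A (x ::ₘ m) F ≤ Real.exp εs * A (y ::ₘ m) F + δ)
    (D1 D2 : Fin t → X) (i : Fin t) (hne : D1 i ≠ D2 i)
    (heq : ∀ j, j ≠ i → D1 j = D2 j) (F : Set Ω) :
    (∑ J ∈ Finset.powersetCard n (Finset.univ : Finset (Fin t)),
        A (Multiset.map D1 J.val) F) /
      ((Finset.powersetCard n (Finset.univ : Finset (Fin t))).card : ℝ)
      ≤ Real.exp ε *
          ((∑ J ∈ Finset.powersetCard n (Finset.univ : Finset (Fin t)),
              A (Multiset.map D2 J.val) F) /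
            ((Finset.powersetCard n (Finset.univ : Finset (Fin t))).card : ℝ))
        + (4 * ε / (3 + Real.exp εs)) * δ := by
  classical
  set s := Real.exp εs with hs
  set E := Real.exp ε with hE
  have hspos : 0 < s := Real.exp_pos _
  have hEpos : 0 < E := Real.exp_pos _
  have hE1 : 1 + ε ≤ E := by
    have := Real.add_one_le_exp ε
    linarith
  set P := Finset.powersetCard n (Finset.univ : Finset (Fin t)) with hPdef
  set S1 := P.filter (fun J => i ∈ J) with hS1def
  set S0 := P.filter (fun J => ¬ i ∈ J) with hS0def
  have hcard : ∀ J ∈ P, J.card = n := fun J hJ => Finset.mem_powersetCard_univ.mp hJ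
  have hnR : (1 : ℝ) ≤ (n : ℝ) := by exact_mod_cast hn
  -- maps agree off i
  have hmapeq : ∀ (J : Finset (Fin t)), i ∉ J →
      Multiset.map D1 J.val = Multiset.map D2 J.val := by
    intro J hiJ
    refine Multiset.map_congr rfl ?_
    intro x hx
    refine heq x ?_
    rintro rfl
    exact hiJ hx
  -- cons decomposition
  have hcons : ∀ (D : Fin t → X) (J : Finset (Fin t)), i ∈ J →
      Multiset.map D J.val = D i ::ₘ Multiset.map D (J.erase i).val := by
    intro D J hiJ
    have hv : J.val = i ::ₘ (J.erase i).val := by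
      rw [Finset.erase_val]
      exact (Multiset.cons_erase (by exact_mod_cast hiJ)).symm
    rw [hv, Multiset.map_cons]
  -- pointwise DP bound
  have hpt : ∀ J ∈ S1, ∀ (x y : X),
      A (x ::ₘ Multiset.map D1 (J.erase i).val) F
        ≤ s * A (y ::ₘ Multiset.map D1 (J.erase i).val) F + δ := by
    intro J hJ x y
    apply hDP
    rw [Multiset.card_map]
    have hJP : J ∈ P := (Finset.mem_filter.mp hJ).1
    have h1 : (J.erase i).card = n - 1 := by
      rw [Finset.card_erase_of_mem (Finset.mem_filter.mp hJ).2, hcard J hJP]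
    exact h1
  -- Inequality (1)
  have h1 : ∑ J ∈ S1, A (Multiset.map D1 J.val) F
      ≤ s * ∑ J ∈ S1, A (Multiset.map D2 J.val) F + (S1.card : ℝ) * δ := by
    have hb : ∀ J ∈ S1, A (Multiset.map D1 J.val) F
        ≤ s * A (Multiset.map D2 J.val) F + δ := by
      intro J hJ
      have hiJ : i ∈ J := (Finset.mem_filter.mp hJ).2
      rw [hcons D1 J hiJ, hcons D2 J hiJ]
      have hm : Multiset.map D2 (J.erase i).val = Multiset.map D1 (J.erase i).val := by
        refine Multiset.map_congr rfl ?_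
        intro x hx
        refine (heq x ?_).symm
        rintro rfl
        exact Finset.notMem_erase _ _ hx
      rw [hm]
      exact hpt J hJ (D1 i) (D2 i)
    calc ∑ J ∈ S1, A (Multiset.map D1 J.val) F
        ≤ ∑ J ∈ S1, (s * A (Multiset.map D2 J.val) F + δ) := Finset.sum_le_sum hb
      _ = s * ∑ J ∈ S1, A (Multiset.map D2 J.val) F + (S1.card : ℝ) * δ := by
          rw [Finset.sum_add_distrib, ← Finset.mul_sum, Finset.sum_const, nsmul_eq_mul]
  -- key bijection
  have key : ∀ g : Finset (Fin t) → ℝ,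
      ∑ p ∈ S1.sigma (fun J => Finset.univ \ J), g (insert p.2 (p.1.erase i))
        = ∑ p ∈ S0.sigma (fun J => J), g p.1 := by
    intro g
    refine Finset.sum_nbij' (fun p => ⟨insert p.2 (p.1.erase i), p.2⟩)
      (fun p => ⟨insert i (p.1.erase p.2), p.2⟩) ?_ ?_ ?_ ?_ ?_
    · rintro ⟨J, j⟩ hp
      dsimp only at hp ⊢
      rw [Finset.mem_sigma] at hp
      obtain ⟨hJ, hj⟩ := hp
      have hJP : J ∈ P := (Finset.mem_filter.mp hJ).1
      have hiJ : i ∈ J := (Finset.mem_filter.mp hJ).2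
      have hjJ : j ∉ J := (Finset.mem_sdiff.mp hj).2
      have hje : j ∉ J.erase i := fun h => hjJ (Finset.mem_of_mem_erase h)
      rw [Finset.mem_sigma]
      constructor
      · rw [hS0def, Finset.mem_filter]
        constructor
        · rw [hPdef, Finset.mem_powersetCard_univ, Finset.card_insert_of_notMem hje,
            Finset.card_erase_of_mem hiJ, hcard J hJP]
          omega
        · intro hmem
          rcases Finset.mem_insert.mp hmem with h | h
          · exact hjJ (h ▸ hiJ)
          · exact Finset.notMem_erase i J h
      · exact Finset.mem_insert_self _ _
    · rintro ⟨J, j⟩ hp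
      dsimp only at hp ⊢
      rw [Finset.mem_sigma] at hp
      obtain ⟨hJ, hj⟩ := hp
      have hJP : J ∈ P := (Finset.mem_filter.mp hJ).1
      have hiJ : i ∉ J := (Finset.mem_filter.mp hJ).2
      have hie : i ∉ J.erase j := fun h => hiJ (Finset.mem_of_mem_erase h)
      rw [Finset.mem_sigma]
      constructor
      · rw [hS1def, Finset.mem_filter]
        constructor
        · rw [hPdef, Finset.mem_powersetCard_univ, Finset.card_insert_of_notMem hie,
            Finset.card_erase_of_mem hj, hcard J hJP]
          omega
        · exact Finset.mem_insert_self _ _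
      · rw [Finset.mem_sdiff]
        refine ⟨Finset.mem_univ _, ?_⟩
        intro hmem
        rcases Finset.mem_insert.mp hmem with h | h
        · exact hiJ (h ▸ hj)
        · exact Finset.notMem_erase j J h
    · rintro ⟨J, j⟩ hp
      dsimp only at hp ⊢
      rw [Finset.mem_sigma] at hp
      obtain ⟨hJ, hj⟩ := hp
      have hiJ : i ∈ J := (Finset.mem_filter.mp hJ).2
      have hjJ : j ∉ J := (Finset.mem_sdiff.mp hj).2
      have hje : j ∉ J.erase i := fun h => hjJ (Finset.mem_of_mem_erase h)
      rw [Finset.erase_insert hje, Finset.insert_erase hiJ]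
    · rintro ⟨J, j⟩ hp
      dsimp only at hp ⊢
      rw [Finset.mem_sigma] at hp
      obtain ⟨hJ, hj⟩ := hp
      have hiJ : i ∉ J := (Finset.mem_filter.mp hJ).2
      have hie : i ∉ J.erase j := fun h => hiJ (Finset.mem_of_mem_erase h)
      rw [Finset.erase_insert hie, Finset.insert_erase hj]
    · rintro ⟨J, j⟩ _
      rfl
  -- count identity
  have hucard : ∀ J ∈ S1, (Finset.univ \ J).card = t - n := by
    intro J hJ
    have hJP : J ∈ P := (Finset.mem_filter.mp hJ).1
    rw [Finset.card_sdiff_of_subset (Finset.subset_univ J), Finset.card_univ, Fintype.card_fin,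
      hcard J hJP]
  have hcount : (S1.card : ℝ) * ((t : ℝ) - n) = (S0.card : ℝ) * n := by
    have hk := key (fun _ => (1 : ℝ))
    rw [Finset.sum_sigma, Finset.sum_sigma] at hk
    simp only [Finset.sum_const, nsmul_eq_mul, mul_one] at hk
    have hL : ∑ J ∈ S1, ((Finset.univ \ J).card : ℝ) = (S1.card : ℝ) * ((t : ℝ) - n) := by
      rw [Finset.sum_congr rfl (fun J hJ => by rw [hucard J hJ])]
      rw [Finset.sum_const, nsmul_eq_mul, Nat.cast_sub hnt]
    have hR : ∑ J ∈ S0, ((J.card : ℝ)) = (S0.card : ℝ) * n := by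
      rw [Finset.sum_congr rfl (fun J hJ => by
        rw [hcard J (Finset.mem_filter.mp hJ).1])]
      rw [Finset.sum_const, nsmul_eq_mul]
    rw [hL, hR] at hk
    exact hk
  -- Inequality (2)
  have h2 : ((t : ℝ) - n) * ∑ J ∈ S1, A (Multiset.map D1 J.val) F
      ≤ s * ((n : ℝ) * ∑ J ∈ S0, A (Multiset.map D1 J.val) F)
        + (S1.card : ℝ) * ((t : ℝ) - n) * δ := by
    have hL : ∑ p ∈ S1.sigma (fun J => Finset.univ \ J), A (Multiset.map D1 p.1.val) F
        = ((t : ℝ) - n) * ∑ J ∈ S1, A (Multiset.map D1 J.val) F := by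
      rw [Finset.sum_sigma]
      simp only [Finset.sum_const, nsmul_eq_mul]
      rw [Finset.sum_congr rfl (fun J hJ => by rw [hucard J hJ]),
        Nat.cast_sub hnt, ← Finset.mul_sum]
    have hR : ∑ p ∈ S0.sigma (fun J => J), A (Multiset.map D1 p.1.val) F
        = (n : ℝ) * ∑ J ∈ S0, A (Multiset.map D1 J.val) F := by
      rw [Finset.sum_sigma]
      simp only [Finset.sum_const, nsmul_eq_mul]
      rw [Finset.sum_congr rfl (fun J hJ => by
        rw [hcard J (Finset.mem_filter.mp hJ).1]), ← Finset.mul_sum]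
    have hbd : ∀ p ∈ S1.sigma (fun J => Finset.univ \ J),
        A (Multiset.map D1 p.1.val) F
          ≤ s * A (Multiset.map D1 (insert p.2 (p.1.erase i)).val) F + δ := by
      rintro ⟨J, j⟩ hp
      rw [Finset.mem_sigma] at hp
      obtain ⟨hJ, hj⟩ := hp
      have hiJ : i ∈ J := (Finset.mem_filter.mp hJ).2
      have hjJ : j ∉ J := (Finset.mem_sdiff.mp hj).2
      have hje : j ∉ J.erase i := fun h => hjJ (Finset.mem_of_mem_erase h)
      have hins : Multiset.map D1 (insert j (J.erase i)).val
          = D1 j ::ₘ Multiset.map D1 (J.erase i).val := by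
        rw [Finset.insert_val_of_notMem hje, Multiset.map_cons]
      simp only
      rw [hcons D1 J hiJ, hins]
      exact hpt J hJ (D1 i) (D1 j)
    have hcardsig : ((S1.sigma (fun J => Finset.univ \ J)).card : ℝ)
        = (S1.card : ℝ) * ((t : ℝ) - n) := by
      rw [Finset.card_sigma]
      rw [Finset.sum_congr rfl hucard, Finset.sum_const, smul_eq_mul]
      push_cast [Nat.cast_sub hnt]
      ring
    calc ((t : ℝ) - n) * ∑ J ∈ S1, A (Multiset.map D1 J.val) F
        = ∑ p ∈ S1.sigma (fun J => Finset.univ \ J), A (Multiset.map D1 p.1.val) F := hL.symm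
      _ ≤ ∑ p ∈ S1.sigma (fun J => Finset.univ \ J),
            (s * A (Multiset.map D1 (insert p.2 (p.1.erase i)).val) F + δ) :=
          Finset.sum_le_sum hbd
      _ = s * ∑ p ∈ S1.sigma (fun J => Finset.univ \ J),
            A (Multiset.map D1 (insert p.2 (p.1.erase i)).val) F
          + ((S1.sigma (fun J => Finset.univ \ J)).card : ℝ) * δ := by
          rw [Finset.sum_add_distrib, ← Finset.mul_sum, Finset.sum_const, nsmul_eq_mul]
      _ = s * ((n : ℝ) * ∑ J ∈ S0, A (Multiset.map D1 J.val) F)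
          + (S1.card : ℝ) * ((t : ℝ) - n) * δ := by
          rw [key (fun J => A (Multiset.map D1 J.val) F), hR, hcardsig]
  -- abbreviations
  set a1 := ∑ J ∈ S1, A (Multiset.map D1 J.val) F with ha1def
  set a2 := ∑ J ∈ S1, A (Multiset.map D2 J.val) F with ha2def
  set c0 := ∑ J ∈ S0, A (Multiset.map D2 J.val) F with hc0def
  have h0eq : ∑ J ∈ S0, A (Multiset.map D1 J.val) F = c0 := by
    refine Finset.sum_congr rfl ?_
    intro J hJ
    rw [hmapeq J (Finset.mem_filter.mp hJ).2]
  rw [h0eq] at h2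
  set N := (P.card : ℝ) with hNdef
  set N1 := (S1.card : ℝ) with hN1def
  have hNpos : (0 : ℝ) < N := by
    rw [hNdef, hPdef]
    have : (Finset.powersetCard n (Finset.univ : Finset (Fin t))).card = t.choose n := by
      rw [Finset.card_powersetCard, Finset.card_univ, Fintype.card_fin]
    rw [this]
    exact_mod_cast Nat.choose_pos hnt
  have hsplitcard : S1.card + S0.card = P.card := Finset.card_filter_add_card_filter_not _
  have hsumR : N1 + (S0.card : ℝ) = N := by
    rw [hN1def, hNdef, ← hsplitcard]
    push_cast
    ring
  have hN1t : (t : ℝ) * N1 = (n : ℝ) * N := by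
    linear_combination hcount + (n : ℝ) * hsumR
  have hεne : ε ≠ 0 := ne_of_gt hε
  have hεt : ε * (t : ℝ) = (n : ℝ) * (3 + s) := by
    rw [ht]
    field_simp
  have hnne : (n : ℝ) ≠ 0 := by positivity
  have hεN : ε * N = (3 + s) * N1 :=
    mul_left_cancel₀ hnne (by linear_combination N1 * hεt - ε * hN1t)
  have h3s : (0 : ℝ) < 3 + s := by linarith only [hspos]
  have hnpos : (0 : ℝ) < (n : ℝ) := by positivity
  have hu : (n : ℝ) < t := by
    have hstep1 : (n : ℝ) * 1 < (n : ℝ) * (3 + s) :=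
      mul_lt_mul_of_pos_left (by linarith only [hspos]) hnpos
    have hstep2 : ε * (t : ℝ) ≤ 1 * (t : ℝ) :=
      mul_le_mul_of_nonneg_right hε1 (Nat.cast_nonneg t)
    rw [hεt] at hstep2
    linarith only [hstep1, hstep2]
  set u := (t : ℝ) - n with hudef
  have hupos : 0 < u := by rw [hudef]; linarith only [hu]
  have ha1nn : 0 ≤ a1 := Finset.sum_nonneg fun J _ => hA0 _ _
  have ha2nn : 0 ≤ a2 := Finset.sum_nonneg fun J _ => hA0 _ _
  have hc0nn : 0 ≤ c0 := Finset.sum_nonneg fun J _ => hA0 _ _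
  have hN1nn : 0 ≤ N1 := by rw [hN1def]; positivity
  -- delta term
  have heq4 : 4 * ε / (3 + s) * δ * N = 4 * δ * N1 := by
    field_simp
    linear_combination δ * hεN
  have hδterm : N1 * δ ≤ 4 * ε / (3 + s) * δ * N := by
    rw [heq4]
    linarith only [mul_nonneg hδ hN1nn]
  -- main inequality
  have main : a1 + c0 ≤ E * (a2 + c0) + 4 * ε / (3 + s) * δ * N := by
    rcases le_or_gt s E with hcase | hcase
    · have hsa : s * a2 ≤ E * a2 := mul_le_mul_of_nonneg_right hcase ha2nn
      have hc : 1 * c0 ≤ E * c0 :=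
        mul_le_mul_of_nonneg_right (by linarith only [hE1, hε]) hc0nn
      linarith only [h1, hsa, hc, hδterm]
    · -- E < s
      set β := E / s with hβdef
      have hβ0 : 0 ≤ β := by positivity
      have hβ1 : β ≤ 1 := by
        rw [hβdef, div_le_one hspos]
        linarith only [hcase]
      have hβs : β * s = E := by
        rw [hβdef]
        field_simp
      have hA' := mul_le_mul_of_nonneg_left h1 (mul_nonneg hβ0 hupos.le)
      have hB' := mul_le_mul_of_nonneg_left h2 (by linarith only [hβ1] : (0:ℝ) ≤ 1 - β)
      have hsum := add_le_add hA' hB'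
      have hL' : β * u * a1 + (1 - β) * (u * a1) = u * a1 := by ring
      have hR' : β * u * (s * a2 + N1 * δ)
          + (1 - β) * (s * ((n : ℝ) * c0) + N1 * u * δ)
          = E * (u * a2) + (s - E) * ((n : ℝ) * c0) + u * (N1 * δ) := by
        linear_combination (u * a2 - (n : ℝ) * c0) * hβs
      have hcomb : u * a1 ≤ E * (u * a2) + (s - E) * ((n : ℝ) * c0) + u * (N1 * δ) := by
        linarith only [hsum, hL', hR']
      -- scalar inequality
      have hεu : u * ε = (n : ℝ) * (3 + s - ε) := by
        rw [hudef]
        linear_combination hεt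
      have hsc : (s - E) * (n : ℝ) ≤ (E - 1) * u := by
        have h35 : (0:ℝ) ≤ 3 + s - ε := by linarith only [hspos, hε1]
        have hq1 : (0:ℝ) ≤ (n : ℝ) * (3 + s - ε) := mul_nonneg hnpos.le h35
        have hd2 : ε * ((n : ℝ) * (3 + s - ε)) ≤ (E - 1) * ((n : ℝ) * (3 + s - ε)) :=
          mul_le_mul_of_nonneg_right (by linarith only [hE1]) hq1
        have hd1 : (E - 1) * (u * ε) = (E - 1) * ((n : ℝ) * (3 + s - ε)) := by
          rw [hεu]
        have hd3 : ε * ((s - E) * (n : ℝ)) ≤ ε * ((n : ℝ) * (3 + s - ε)) := by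
          refine mul_le_mul_of_nonneg_left ?_ hε.le
          have h1' : (s - E) * (n : ℝ) ≤ (3 + s - ε) * (n : ℝ) :=
            mul_le_mul_of_nonneg_right (by linarith only [hEpos, hε1]) hnpos.le
          linarith only [h1']
        have hkey : ε * ((s - E) * (n : ℝ)) ≤ ε * ((E - 1) * u) := by
          linarith only [hd1, hd2, hd3]
        exact le_of_mul_le_mul_left hkey hε
      have hsc' : (s - E) * ((n : ℝ) * c0) ≤ (E - 1) * u * c0 := by
        have h := mul_le_mul_of_nonneg_right hsc hc0nn
        linarith only [h]
      have hstep : u * a1 ≤ u * (E * a2 + (E - 1) * c0 + N1 * δ) := by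
        linarith only [hcomb, hsc']
      have hstep2 : a1 ≤ E * a2 + (E - 1) * c0 + N1 * δ :=
        le_of_mul_le_mul_left hstep hupos
      linarith only [hstep2, hδterm]
  -- finish: divide by N
  rw [← Finset.sum_filter_add_sum_filter_not P (fun J => i ∈ J)
      (fun J => A (Multiset.map D1 J.val) F),
    ← Finset.sum_filter_add_sum_filter_not P (fun J => i ∈ J)
      (fun J => A (Multiset.map D2 J.val) F)]
  rw [show P.filter (fun J => i ∈ J) = S1 from rfl,
    show P.filter (fun J => ¬ i ∈ J) = S0 from rfl]
  rw [← ha1def, ← ha2def, ← hc0def, h0eq]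
  calc (a1 + c0) / N ≤ (E * (a2 + c0) + 4 * ε / (3 + s) * δ * N) / N := by
        gcongr
      _ = E * ((a2 + c0) / N) + 4 * ε / (3 + s) * δ := by
        rw [add_div, mul_div_assoc, mul_div_cancel_right₀ _ (ne_of_gt hNpos)]
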